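/- arXiv:2204.11691 — 2 statements merged into one kernel-verified Lean document; each statement's English description precedes it below -/
import Mathlib

section
/- The equilibrium of the fluid model of the Tangle under a tips inflation attack with constant arrival rate β is given by x̂ = hβ/(pk−1), l̂ = pkhβ/(pk−1), ŵ = (pk−1)⁻¹(pkh−h)β, provided pk ≠ 1. That is, these values satisfy 0 = 1 − pk·x̂/l̂ and l̂ − x̂ = βpkh·x̂/l̂. -/
/-- Equilibrium of the fluid model of the Tangle under a tips inflation attack. -/
theorem tangle_attack_equilibrium (h β p k : ℝ)
    (hh : 0 < h) (hβ : 0 < β) (hp0 : 0 ≤ p) (hp1 : p ≤ 1) (hk : 0 < k)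
    (hpkne : p * k ≠ 1) (hpk0 : p * k ≠ 0) :
    let xhat := h * β / (p * k - 1)
    let lhat := p * k * h * β / (p * k - 1)
    let what := (p * k - 1)⁻¹ * (p * k * h - h) * β
    (0 = 1 - p * k * (xhat / lhat)) ∧ (lhat - xhat = β * p * k * h * (xhat / lhat)) ∧ what = lhat - xhat := by
  have h1 : p * k - 1 ≠ 0 := sub_ne_zero.mpr hpkne
  have hhne : h ≠ 0 := hh.ne'
  have hβne : β ≠ 0 := hβ.ne'
  have hrat : (h * β / (p * k - 1)) / (p * k * h * β / (p * k - 1)) = (p * k)⁻¹ := by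
    field_simp
  intro xhat lhat what
  have hx : xhat / lhat = (p * k)⁻¹ := hrat
  have hpne : p ≠ 0 := left_ne_zero_of_mul hpk0
  refine ⟨?_, ?_, ?_⟩ <;> simp only [hx, xhat, lhat, what] <;> field_simp <;> ring
end

section
/- Let 0 < p < 1, m > 0, and K = 3pm + 1 − 2p + √((2p − 1 − pm)² + 4pm). Then K > 0, and the values l̃ = Kβh/(2pm), x̃ = Kβh/(pm(4p − 4pm + K)), k̃ = K/(2p) + 2 − 2m satisfy the equilibrium conditions of the controlled fluid model: p·k̃·x̃/l̃ = 1, l̃ − x̃ = βh (from w̃ = pβhk̃x̃/l̃ = βh), and k̃ = 2 + (m/(βh))(l̃ − 2βh). -/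
/-- Under attack (p < 1), the controlled fluid model has the equilibrium
ltil = Kβh/(2pm), xtil = Kβh/(pm(4p − 4pm + K)), ktil = K/(2p) + 2 − 2m, where
K = 3pm + 1 − 2p + √((2p − 1 − pm)² + 4pm). -/
theorem controlled_equilibrium (p m β h : ℝ)
    (hp0 : 0 < p) (hp1 : p < 1) (hm : 0 < m) (hβ : 0 < β) (hh : 0 < h) :
    let K : ℝ := 3 * p * m + 1 - 2 * p + Real.sqrt ((2 * p - 1 - p * m) ^ 2 + 4 * p * m)
    let ltil : ℝ := K * β * h / (2 * p * m)
    let xtil : ℝ := K * β * h / (p * m * (4 * p - 4 * p * m + K))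
    let ktil : ℝ := K / (2 * p) + 2 - 2 * m
    0 < K ∧
    p * ktil * xtil / ltil = 1 ∧
    ltil - xtil = β * h ∧
    ktil = 2 + (m / (β * h)) * max (ltil - 2 * β * h) 0 := by
  intro K ltil xtil ktil
  have hs0 : 0 ≤ Real.sqrt ((2 * p - 1 - p * m) ^ 2 + 4 * p * m) := Real.sqrt_nonneg _
  have hs2 : (Real.sqrt ((2 * p - 1 - p * m) ^ 2 + 4 * p * m)) ^ 2
      = (2 * p - 1 - p * m) ^ 2 + 4 * p * m :=
    Real.sq_sqrt (by positivity)
  set s : ℝ := Real.sqrt ((2 * p - 1 - p * m) ^ 2 + 4 * p * m) with hs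
  have hK : K = 3 * p * m + 1 - 2 * p + s := rfl
  have hK4 : 4 * p * m < K := by
    rw [hK]
    nlinarith [mul_pos (mul_pos hp0 hm) (sub_pos.mpr hp1), mul_pos hp0 hm]
  have hKpos : 0 < K := by nlinarith [mul_pos hp0 hm]
  have hD : 0 < 4 * p - 4 * p * m + K := by nlinarith
  have hq : K ^ 2 - 2 * (3 * p * m + 1 - 2 * p) * K + 8 * p ^ 2 * m * (m - 1) = 0 := by
    rw [hK]; linear_combination hs2
  have hpm : p * m ≠ 0 := by positivity
  have hβh : (0:ℝ) < β * h := by positivity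
  have hl : ltil = K * β * h / (2 * p * m) := rfl
  have hx : xtil = K * β * h / (p * m * (4 * p - 4 * p * m + K)) := rfl
  have hk : ktil = K / (2 * p) + 2 - 2 * m := rfl
  refine ⟨hKpos, ?_, ?_, ?_⟩
  · rw [hl, hx, hk]
    rw [div_eq_one_iff_eq (by positivity)]
    field_simp [show p * 4 * (1 - m) + K ≠ 0 by nlinarith]
    ring
  · rw [hl, hx]
    field_simp [show p * 4 * (1 - m) + K ≠ 0 by nlinarith]
    linear_combination hq
  · have hmax : max (ltil - 2 * β * h) 0 = ltil - 2 * β * h := by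
      apply max_eq_left
      rw [hl]
      rw [sub_nonneg, le_div_iff₀ (by positivity)]
      nlinarith
    rw [hmax, hk, hl]
    field_simp
    ring
end
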